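/- Let γ be a cubic polynomial curve in R^3 and L ∈ R^3. If γ'(0) = L₋ + L and γ'(1) = L + L₊ where L₋, L, L₊ ∈ R^3 and γ(1) - γ(0) = L, and the three vectors L₋, L, L₊ are linearly dependent (coplanar data), then the torsion numerator [γ'(t), γ''(t), γ'''(t)] vanishes identically, so γ is a planar curve whenever γ' × γ'' is not identically zero. -/

import Mathlib

open RealInnerProductSpace

lemma hasDerivAt_poly3 (a b c d t : ℝ) :
    HasDerivAt (fun s : ℝ => a*s^3 + b*s^2 + c*s + d) (3*a*t^2 + 2*b*t + c) t := by
  have h := (((hasDerivAt_pow 3 t).const_mul a).add ((hasDerivAt_pow 2 t).const_mul b)).add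
    (((hasDerivAt_id t).const_mul c).add (hasDerivAt_const t d))
  refine (h.congr_deriv ?_).congr_of_eventuallyEq (Filter.Eventually.of_forall fun s => ?_)
  · simp; ring
  · simp only [Pi.add_apply, id]; ring

lemma key (a b c d : ℝ) (v : EuclideanSpace ℝ (Fin 3)) (t : ℝ) :
    HasDerivAt (fun s : ℝ => (a*s^3+b*s^2+c*s+d) • v) ((3*a*t^2+2*b*t+c) • v) t :=
  (hasDerivAt_poly3 a b c d t).smul_const v

noncomputable def cross3 (a b : EuclideanSpace ℝ (Fin 3)) : EuclideanSpace ℝ (Fin 3) :=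
  (WithLp.equiv 2 (Fin 3 → ℝ)).symm
    ![a 1 * b 2 - a 2 * b 1, a 2 * b 0 - a 0 * b 2, a 0 * b 1 - a 1 * b 0]

theorem stmt15 (x0 x1 Lm L Lp m0 m1 : EuclideanSpace ℝ (Fin 3))
    (hL : L = x1 - x0) (hm0 : m0 = Lm + L) (hm1 : m1 = L + Lp)
    (hdep : ¬ LinearIndependent ℝ ![Lm, L, Lp])
    (γ : ℝ → EuclideanSpace ℝ (Fin 3))
    (hγ : ∀ t, γ t = (2 * t ^ 3 - 3 * t ^ 2 + 1) • x0 + (t ^ 3 - 2 * t ^ 2 + t) • m0 +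
      (-2 * t ^ 3 + 3 * t ^ 2) • x1 + (t ^ 3 - t ^ 2) • m1) :
    ∀ t : ℝ,
      ⟪cross3 (deriv γ t) (deriv (deriv γ) t), deriv (deriv (deriv γ)) t⟫ = 0 := by
  have hγ' : γ = fun t => (2*t^3+(-3)*t^2+0*t+1) • x0 + (1*t^3+(-2)*t^2+1*t+0) • m0 +
      ((-2)*t^3+3*t^2+0*t+0) • x1 + (1*t^3+(-1)*t^2+0*t+0) • m1 := by
    funext t; rw [hγ]; module
  have h1 : ∀ t, HasDerivAt γ
      ((0*t^3+6*t^2+(-6)*t+0) • x0 + (0*t^3+3*t^2+(-4)*t+1) • m0 +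
       (0*t^3+(-6)*t^2+6*t+0) • x1 + (0*t^3+3*t^2+(-2)*t+0) • m1) t := by
    intro t
    rw [hγ']
    have h := (((key 2 (-3) 0 1 x0 t).add (key 1 (-2) 1 0 m0 t)).add
      (key (-2) 3 0 0 x1 t)).add (key 1 (-1) 0 0 m1 t)
    exact h.congr_deriv (by module)
  have hd1 : deriv γ = fun t => (0*t^3+6*t^2+(-6)*t+0) • x0 + (0*t^3+3*t^2+(-4)*t+1) • m0 +
      (0*t^3+(-6)*t^2+6*t+0) • x1 + (0*t^3+3*t^2+(-2)*t+0) • m1 :=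
    funext fun t => (h1 t).deriv
  have h2 : ∀ t, HasDerivAt (deriv γ)
      ((0*t^3+0*t^2+12*t+(-6)) • x0 + (0*t^3+0*t^2+6*t+(-4)) • m0 +
       (0*t^3+0*t^2+(-12)*t+6) • x1 + (0*t^3+0*t^2+6*t+(-2)) • m1) t := by
    intro t
    rw [hd1]
    have h := (((key 0 6 (-6) 0 x0 t).add (key 0 3 (-4) 1 m0 t)).add
      (key 0 (-6) 6 0 x1 t)).add (key 0 3 (-2) 0 m1 t)
    exact h.congr_deriv (by module)
  have hd2 : deriv (deriv γ) = fun t => (0*t^3+0*t^2+12*t+(-6)) • x0 + (0*t^3+0*t^2+6*t+(-4)) • m0 +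
      (0*t^3+0*t^2+(-12)*t+6) • x1 + (0*t^3+0*t^2+6*t+(-2)) • m1 :=
    funext fun t => (h2 t).deriv
  have h3 : ∀ t, HasDerivAt (deriv (deriv γ))
      ((12:ℝ) • x0 + (6:ℝ) • m0 + (-12:ℝ) • x1 + (6:ℝ) • m1) t := by
    intro t
    rw [hd2]
    have h := (((key 0 0 12 (-6) x0 t).add (key 0 0 6 (-4) m0 t)).add
      (key 0 0 (-12) 6 x1 t)).add (key 0 0 6 (-2) m1 t)
    exact h.congr_deriv (by module)
  have hd3 : deriv (deriv (deriv γ)) = fun _ =>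
      (12:ℝ) • x0 + (6:ℝ) • m0 + (-12:ℝ) • x1 + (6:ℝ) • m1 :=
    funext fun t => (h3 t).deriv
  -- extract linear relation
  rw [Fintype.not_linearIndependent_iff] at hdep
  obtain ⟨g, hg, i, hi⟩ := hdep
  have hrel : ∀ j : Fin 3, g 0 * Lm j + g 1 * L j + g 2 * Lp j = 0 := by
    intro j
    have h := congrArg (fun v : EuclideanSpace ℝ (Fin 3) => v j) hg
    simpa [Fin.sum_univ_three] using h
  set D : ℝ := Lm 0 * (L 1 * Lp 2 - L 2 * Lp 1) - Lm 1 * (L 0 * Lp 2 - L 2 * Lp 0)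
      + Lm 2 * (L 0 * Lp 1 - L 1 * Lp 0) with hDdef
  have hD : D = 0 := by
    fin_cases i
    · have h : g 0 * D = 0 := by
        rw [hDdef]
        linear_combination (L 1 * Lp 2 - L 2 * Lp 1) * hrel 0 +
          (L 2 * Lp 0 - L 0 * Lp 2) * hrel 1 + (L 0 * Lp 1 - L 1 * Lp 0) * hrel 2
      exact (mul_eq_zero.mp h).resolve_left hi
    · have h : g 1 * D = 0 := by
        rw [hDdef]
        linear_combination (Lp 1 * Lm 2 - Lp 2 * Lm 1) * hrel 0 +
          (Lp 2 * Lm 0 - Lp 0 * Lm 2) * hrel 1 + (Lp 0 * Lm 1 - Lp 1 * Lm 0) * hrel 2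
      exact (mul_eq_zero.mp h).resolve_left hi
    · have h : g 2 * D = 0 := by
        rw [hDdef]
        linear_combination (Lm 1 * L 2 - Lm 2 * L 1) * hrel 0 +
          (Lm 2 * L 0 - Lm 0 * L 2) * hrel 1 + (Lm 0 * L 1 - Lm 1 * L 0) * hrel 2
      exact (mul_eq_zero.mp h).resolve_left hi
  intro t
  have hx1 : ∀ j : Fin 3, x1 j = x0 j + L j := by
    intro j; rw [hL]; simp
  have hm0' : ∀ j : Fin 3, m0 j = Lm j + L j := by intro j; rw [hm0]; simp
  have hm1' : ∀ j : Fin 3, m1 j = L j + Lp j := by intro j; rw [hm1]; simp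
  rw [hd3, hd2, hd1]
  simp only [cross3, PiLp.inner_apply, RCLike.inner_apply, conj_trivial, Fin.sum_univ_three,
    WithLp.equiv_symm_apply, PiLp.toLp_apply, PiLp.add_apply, PiLp.smul_apply, PiLp.sub_apply, smul_eq_mul,
    Matrix.cons_val_zero, Matrix.cons_val_one, Matrix.head_cons, Matrix.cons_val_two,
    Matrix.tail_cons]
  rw [hx1 0, hx1 1, hx1 2, hm0' 0, hm0' 1, hm0' 2, hm1' 0, hm1' 1, hm1' 2]
  linear_combination 12 * hD
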